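/- Let B be a maximal computably enumerable set and let X, Y be disjoint computably enumerable sets with X ∪ Y = B such that neither X nor Y is computable. Then both X and Y are semilow_{1.5}. -/

import Mathlib

open Nat.Partrec (Code)

/-- `Wset e` is the `e`-th computably enumerable set: the domain of the `e`-th
partial computable function in the standard enumeration. -/
def Wset (e : ℕ) : Set ℕ := {x | ((Denumerable.ofNat Code e).eval x).Dom}

/-- A set is computably enumerable iff it occurs in the standard enumeration. -/
def CEset (A : Set ℕ) : Prop := ∃ e, Wset e = A

/-- A c.e. set `B` is maximal if its complement is infinite and for every c.e. set `W`,
either `W ∩ Bᶜ` is finite or `Bᶜ \ W` is finite. -/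
def MaximalCE (B : Set ℕ) : Prop :=
  CEset B ∧ Bᶜ.Infinite ∧ ∀ W : Set ℕ, CEset W → (W ∩ Bᶜ).Finite ∨ (Bᶜ \ W).Finite

/-- `A` is semilow_{1.5} if `{e : W e ∩ Aᶜ infinite}` is one-one reducible to
`Inf = {e : W e infinite}`. -/
def Semilow15 (A : Set ℕ) : Prop :=
  OneOneReducible (fun e => (Wset e ∩ Aᶜ).Infinite) (fun e => (Wset e).Infinite)

open Nat.Partrec.Code in
lemma RePred_of_CEset {A : Set ℕ} (h : CEset A) : REPred (· ∈ A) := by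
  obtain ⟨i, rfl⟩ := h
  have : Nat.Partrec ((Denumerable.ofNat Code i).eval) := exists_code.mpr ⟨_, rfl⟩
  exact (Partrec.nat_iff.mpr this).dom_re

lemma assert_unit_dom (P : Prop) : (Part.assert P fun _ => Part.some ()).Dom ↔ P :=
  ⟨fun h => h.fst, fun h => ⟨h, trivial⟩⟩

lemma REPred.or' {p q : ℕ → Prop} (hp : REPred p) (hq : REPred q) :
    REPred fun x => p x ∨ q x := by
  obtain ⟨k, hk, H⟩ := Partrec.merge' hp hq
  refine hk.dom_re.of_eq fun a => ?_
  rw [(H a).2, assert_unit_dom, assert_unit_dom]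

lemma REPred.and_comp {p q : ℕ → Prop} (hp : REPred p) (hq : ComputablePred q) :
    REPred fun x => p x ∧ q x := by
  have hq' : REPred q := hq.to_re
  have hb : Partrec fun a => (Part.assert (p a) fun _ => Part.some ()).bind
      fun _ => Part.assert (q a) fun _ => Part.some () :=
    hp.bind (hq'.comp Computable.fst)
  refine hb.dom_re.of_eq fun a => ?_
  rw [Part.bind_dom]
  constructor
  · rintro ⟨h1, h2⟩
    exact ⟨(assert_unit_dom _).1 h1, (assert_unit_dom _).1 h2⟩
  · rintro ⟨h1, h2⟩
    exact ⟨(assert_unit_dom _).2 h1, (assert_unit_dom _).2 h2⟩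

lemma REPred.or_comp {p q : ℕ → Prop} (hp : REPred p) (hq : ComputablePred q) :
    REPred fun x => p x ∨ q x :=
  hp.or' hq.to_re

lemma computablePred_eq (a : ℕ) : ComputablePred fun x : ℕ => x = a := by
  refine ComputablePred.computable_iff.2 ⟨fun x => decide (x = a), ?_, ?_⟩
  · exact (Primrec.eq.comp Primrec.id (Primrec.const a)).decide.to_comp
  · funext x; simp

lemma computablePred_finite {S : Set ℕ} (h : S.Finite) : ComputablePred (· ∈ S) := by
  refine Set.Finite.induction_on (motive := fun s _ => ComputablePred (· ∈ s)) S h ?_ ?_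
  · refine ComputablePred.computable_iff.2 ⟨fun _ => false, Computable.const false, ?_⟩
    funext x; simp
  · intro a s _ _ ih
    obtain ⟨f, hf, hfe⟩ := ComputablePred.computable_iff.1 ih
    refine ComputablePred.computable_iff.2
      ⟨fun x => cond (decide (x = a)) true (f x), ?_, ?_⟩
    · exact Computable.cond (Primrec.eq.comp Primrec.id (Primrec.const a)).decide.to_comp
        (Computable.const true) hf
    · funext x
      have : (x ∈ s) = (f x = true) := congrFun hfe x
      by_cases hx : x = a <;> simp [hx, Set.mem_insert_iff, ← this]

/-- Key combinatorial lemma. -/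
lemma key_iff (B X Y : Set ℕ) (hB : MaximalCE B) (hX : CEset X) (hY : CEset Y)
    (hdisj : Disjoint X Y) (hunion : X ∪ Y = B) (hYnc : ¬ ComputablePred (· ∈ Y)) (e : ℕ) :
    (Wset e ∩ Xᶜ).Infinite ↔ (Wset e ∩ Y).Infinite := by
  have hYX : ∀ x, x ∈ Y → x ∉ X := fun x hx => Set.disjoint_right.mp hdisj hx
  have hYB : Y ⊆ B := hunion ▸ Set.subset_union_right
  constructor
  · intro hinf
    have hXc : Xᶜ = Y ∪ Bᶜ := by
      ext x
      simp only [Set.mem_compl_iff, Set.mem_union, ← hunion]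
      constructor
      · intro hx
        by_cases hy : x ∈ Y
        · exact Or.inl hy
        · exact Or.inr (fun h => h.elim hx hy)
      · rintro (hy | hb)
        · exact hYX x hy
        · exact fun hx => hb (Or.inl hx)
    rw [hXc, Set.inter_union_distrib_left] at hinf
    rcases Set.infinite_union.mp hinf with h | h
    · exact h
    · rcases hB.2.2 (Wset e) ⟨e, rfl⟩ with hfin | hfin
      · exact (h hfin).elim
      · by_contra hWY
        rw [Set.not_infinite] at hWY
        apply hYnc
        rw [ComputablePred.computable_iff_re_compl_re']
        refine ⟨RePred_of_CEset hY, ?_⟩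
        have hS : REPred (fun x => x ∈ X ∨ x ∈ Wset e) :=
          (RePred_of_CEset hX).or' (RePred_of_CEset ⟨e, rfl⟩)
        have h1 : REPred fun x => (x ∈ X ∨ x ∈ Wset e) ∧ ¬ x ∈ Wset e ∩ Y :=
          hS.and_comp (computablePred_finite hWY).not
        have h2 : REPred fun x =>
            ((x ∈ X ∨ x ∈ Wset e) ∧ ¬ x ∈ Wset e ∩ Y) ∨ x ∈ Bᶜ \ Wset e :=
          h1.or_comp (computablePred_finite hfin)
        refine h2.of_eq fun x => ?_
        constructor
        · rintro (⟨hxs, hns⟩ | ⟨hnb, _⟩)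
          · rcases hxs with hx | hw
            · exact fun hy => hYX x hy hx
            · exact fun hy => hns ⟨hw, hy⟩
          · exact fun hy => hnb (hYB hy)
        · intro hny
          by_cases hxB : x ∈ B
          · have hxX : x ∈ X := by
              rw [← hunion] at hxB
              exact hxB.elim id fun h => (hny h).elim
            exact Or.inl ⟨Or.inl hxX, fun hc => hny hc.2⟩
          · by_cases hxW : x ∈ Wset e
            · exact Or.inl ⟨Or.inr hxW, fun hc => hny hc.2⟩
            · exact Or.inr ⟨hxB, hxW⟩
  · intro h
    refine h.mono ?_
    intro x hx
    exact ⟨hx.1, hYX x hx.2⟩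

open Nat.Partrec.Code in
lemma exists_inter_index {Y : Set ℕ} (hY : CEset Y) :
    ∃ f : ℕ → ℕ, Computable f ∧ Function.Injective f ∧ ∀ e, Wset (f e) = Wset e ∩ Y := by
  obtain ⟨i, hi⟩ := hY
  set cY := Denumerable.ofNat Code i with hcY
  have hF : Partrec fun n : ℕ => ((Denumerable.ofNat Code n.unpair.1).eval n.unpair.2).bind
      fun _ => cY.eval n.unpair.2 := by
    apply Partrec.bind
    · exact eval_part.comp
        ((Computable.ofNat Code).comp (Computable.fst.comp Computable.unpair))
        (Computable.snd.comp Computable.unpair)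
    · exact eval_part.comp (Computable.const cY)
        (Computable.snd.comp (Computable.unpair.comp Computable.fst))
  obtain ⟨c, hc⟩ := exists_code.mp (Partrec.nat_iff.mp hF)
  refine ⟨fun e => Encodable.encode (curry c e), ?_, ?_, ?_⟩
  · exact (Primrec.encode.comp (primrec₂_curry.comp (Primrec.const c) Primrec.id)).to_comp
  · intro a b h
    exact (curry_inj (Encodable.encode_injective h)).2
  · intro e
    ext x
    have h1 : (Denumerable.ofNat Code (Encodable.encode (curry c e))) = curry c e :=
      Denumerable.ofNat_encode _
    have h2 : (curry c e).eval x =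
        ((Denumerable.ofNat Code e).eval x).bind fun _ => cY.eval x := by
      rw [eval_curry, hc]
      simp
    simp only [Wset, Set.mem_setOf_eq, h1, h2, Set.mem_inter_iff, Part.bind_dom]
    rw [← hi]
    simp only [Wset, Set.mem_setOf_eq]
    exact ⟨fun ⟨a, b⟩ => ⟨a, b⟩, fun ⟨a, b⟩ => ⟨a, b⟩⟩

/-- If `B` is a maximal c.e. set split into disjoint c.e. sets `X`, `Y`, neither of which
is computable, then both `X` and `Y` are semilow_{1.5}. -/
theorem maximal_split_semilow15
    (B X Y : Set ℕ) (hB : MaximalCE B) (hX : CEset X) (hY : CEset Y)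
    (hdisj : Disjoint X Y) (hunion : X ∪ Y = B)
    (hXnc : ¬ ComputablePred (· ∈ X)) (hYnc : ¬ ComputablePred (· ∈ Y)) :
    Semilow15 X ∧ Semilow15 Y := by
  constructor
  · obtain ⟨f, hf, hinj, hW⟩ := exists_inter_index hY
    exact ⟨f, hf, hinj, fun e =>
      (key_iff B X Y hB hX hY hdisj hunion hYnc e).trans
        (by show _ ↔ (Wset (f e)).Infinite; rw [hW e])⟩
  · obtain ⟨f, hf, hinj, hW⟩ := exists_inter_index hX
    exact ⟨f, hf, hinj, fun e =>
      (key_iff B Y X hB hY hX hdisj.symm (by rw [Set.union_comm]; exact hunion) hXnc e).trans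
        (by show _ ↔ (Wset (f e)).Infinite; rw [hW e])⟩
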